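/- Let n ≥ 1, k ≥ 2, m ≥ 1 and r ≤ m be natural numbers. Let G₁, …, G_m be simple graphs, each on n vertices, and suppose that at most r of them fail to be k-Ramsey. Then the iterated Naor product G₁ · (G₂ · ( ⋯ · G_m)), which is a graph on n^m vertices, is t-Ramsey for t = (n+1)^r · k^(m−r). -/

import Mathlib

universe u

/-- The Naor product of two simple graphs: vertices `(u₁,u₂)` and `(v₁,v₂)` are adjacent
iff `u₁` is adjacent to `v₁` in `G₁`, or `u₁ = v₁` and `u₂` is adjacent to `v₂` in `G₂`. -/
def naorProd {V₁ V₂ : Type*} (G₁ : SimpleGraph V₁) (G₂ : SimpleGraph V₂) :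
    SimpleGraph (V₁ × V₂) where
  Adj x y := G₁.Adj x.1 y.1 ∨ (x.1 = y.1 ∧ G₂.Adj x.2 y.2)
  symm := ⟨by
    rintro ⟨u₁, u₂⟩ ⟨v₁, v₂⟩ (h | ⟨h₁, h₂⟩)
    · exact Or.inl h.symm
    · exact Or.inr ⟨h₁.symm, h₂.symm⟩⟩
  loopless := ⟨by
    rintro ⟨u₁, u₂⟩ (h | ⟨-, h⟩)
    · exact G₁.irrefl h
    · exact G₂.irrefl h⟩

/-- The vertex type of the iterated (right-folded) Naor product of `m+1` graphs. -/
def naorVertex : (m : ℕ) → (Fin (m + 1) → Type u) → Type u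
  | 0, V => V 0
  | m + 1, V => V 0 × naorVertex m (fun i => V i.succ)

/-- The iterated (right-folded) Naor product `G₀ · (G₁ · ( ⋯ · G_m))` of `m+1` graphs. -/
def iterNaorProd : (m : ℕ) → (V : Fin (m + 1) → Type u) →
    ((i : Fin (m + 1)) → SimpleGraph (V i)) → SimpleGraph (naorVertex m V)
  | 0, _, G => G 0
  | m + 1, V, G => naorProd (G 0) (iterNaorProd m (fun i => V i.succ) (fun i => G i.succ))

/-- A simple graph is `k`-Ramsey if it has no clique of size `k` and no
independent set of size `k`. -/
def IsRamsey {V : Type*} (G : SimpleGraph V) (k : ℕ) : Prop :=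
  G.CliqueFree k ∧ Gᶜ.CliqueFree k

lemma clique_card_lt {V : Type*} {G : SimpleGraph V} {a : ℕ} (h : G.CliqueFree a)
    {T : Finset V} (hT : G.IsClique T) : T.card < a := by
  by_contra hc
  push_neg at hc
  obtain ⟨T', hsub, hcard⟩ := Finset.exists_subset_card_eq hc
  exact h T' ⟨hT.subset (by exact_mod_cast hsub), hcard⟩

lemma naorProd_cliqueFree {V₁ V₂ : Type*} {G₁ : SimpleGraph V₁} {G₂ : SimpleGraph V₂}
    {a b : ℕ} (ha : 1 ≤ a) (hb : 1 ≤ b)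
    (h₁ : G₁.CliqueFree a) (h₂ : G₂.CliqueFree b) :
    (naorProd G₁ G₂).CliqueFree (a * b) := by
  classical
  rintro S ⟨hclq, hcard⟩
  set T := S.image Prod.fst with hT
  have hTclique : G₁.IsClique T := by
    intro u hu v hv huv
    simp only [hT, Finset.coe_image, Set.mem_image, Finset.mem_coe] at hu hv
    obtain ⟨x, hx, rfl⟩ := hu
    obtain ⟨y, hy, rfl⟩ := hv
    have hxy : x ≠ y := fun h => huv (by rw [h])
    rcases hclq hx hy hxy with h | ⟨h, -⟩
    · exact h
    · exact absurd h huv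
  have hTcard : T.card < a := clique_card_lt h₁ hTclique
  have hfib : ∀ v ∈ T, (S.filter (fun x => x.1 = v)).card < b := by
    intro v hv
    set F := S.filter (fun x => x.1 = v) with hF
    have himg : G₂.IsClique (F.image Prod.snd) := by
      intro p hp q hq hpq
      simp only [Finset.coe_image, Set.mem_image, Finset.mem_coe] at hp hq
      obtain ⟨x, hx, rfl⟩ := hp
      obtain ⟨y, hy, rfl⟩ := hq
      obtain ⟨hxS, hxv⟩ := Finset.mem_filter.mp hx
      obtain ⟨hyS, hyv⟩ := Finset.mem_filter.mp hy
      have hxy : x ≠ y := fun h => hpq (by rw [h])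
      rcases hclq hxS hyS hxy with h | ⟨-, h⟩
      · rw [hxv, hyv] at h; exact absurd h (G₁.irrefl)
      · exact h
    have hinj : Set.InjOn Prod.snd (F : Set (V₁ × V₂)) := by
      intro x hx y hy hxy
      obtain ⟨-, hxv⟩ := Finset.mem_filter.mp hx
      obtain ⟨-, hyv⟩ := Finset.mem_filter.mp hy
      exact Prod.ext (hxv.trans hyv.symm) hxy
    have := clique_card_lt h₂ himg
    rwa [Finset.card_image_of_injOn hinj] at this
  have hsum : S.card = ∑ v ∈ T, (S.filter (fun x => x.1 = v)).card :=
    Finset.card_eq_sum_card_fiberwise (fun x hx => Finset.mem_image_of_mem Prod.fst hx)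
  have hle : S.card ≤ T.card * (b - 1) := by
    rw [hsum]
    calc ∑ v ∈ T, (S.filter (fun x => x.1 = v)).card
        ≤ ∑ _v ∈ T, (b - 1) := Finset.sum_le_sum (fun v hv => by have := hfib v hv; omega)
      _ = T.card * (b - 1) := by rw [Finset.sum_const, smul_eq_mul]
  have : a * b ≤ (a - 1) * (b - 1) := by
    rw [← hcard] at *
    calc S.card ≤ T.card * (b - 1) := hle
      _ ≤ (a - 1) * (b - 1) := Nat.mul_le_mul_right _ (by omega)
  obtain ⟨a', rfl⟩ := Nat.exists_eq_add_of_le ha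
  obtain ⟨b', rfl⟩ := Nat.exists_eq_add_of_le hb
  simp at this
  nlinarith

lemma naorProd_compl {V₁ V₂ : Type*} (G₁ : SimpleGraph V₁) (G₂ : SimpleGraph V₂) :
    (naorProd G₁ G₂)ᶜ = naorProd G₁ᶜ G₂ᶜ := by
  ext ⟨x1, x2⟩ ⟨y1, y2⟩
  by_cases h : x1 = y1
  · subst h
    simp [naorProd, SimpleGraph.compl_adj, Prod.ext_iff]
  · simp [naorProd, SimpleGraph.compl_adj, Prod.ext_iff, h]

lemma iterNaorProd_compl : ∀ (m : ℕ) (V : Fin (m + 1) → Type u)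
    (G : (i : Fin (m + 1)) → SimpleGraph (V i)),
    (iterNaorProd m V G)ᶜ = iterNaorProd m V (fun i => (G i)ᶜ)
  | 0, V, G => rfl
  | m + 1, V, G => by
    show (naorProd _ _)ᶜ = naorProd _ _
    rw [naorProd_compl, iterNaorProd_compl m]

lemma iterNaorProd_cliqueFree : ∀ (m : ℕ) (V : Fin (m + 1) → Type u)
    (G : (i : Fin (m + 1)) → SimpleGraph (V i)) (c : Fin (m + 1) → ℕ)
    (hc : ∀ i, 1 ≤ c i) (h : ∀ i, (G i).CliqueFree (c i)),
    (iterNaorProd m V G).CliqueFree (∏ i, c i)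
  | 0, V, G, c, hc, h => by
    have : (∏ i, c i) = c 0 := by simp
    rw [this]; exact h 0
  | m + 1, V, G, c, hc, h => by
    have : (∏ i, c i) = c 0 * ∏ i : Fin (m + 1), c i.succ := Fin.prod_univ_succ c
    rw [this]
    exact naorProd_cliqueFree (hc 0)
      (Finset.one_le_prod' (fun i _ => hc i.succ)) (h 0)
      (iterNaorProd_cliqueFree m _ _ _ (fun i => hc i.succ) (fun i => h i.succ))


open Classical in
/-- If at most `r` of the `m+1` graphs `G 0, …, G m`, each on `n` vertices, fail to be
`k`-Ramsey, then their iterated Naor product (a graph on `n^(m+1)` vertices) is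
`t`-Ramsey for `t = (n+1)^r · k^(m+1-r)`. -/
theorem iterNaorProd_isRamsey_of_mostly_ramsey (n k m r : ℕ)
    (hn : 1 ≤ n) (hk : 2 ≤ k) (hr : r ≤ m + 1)
    (G : Fin (m + 1) → SimpleGraph (Fin n))
    (hG : (Finset.univ.filter (fun i => ¬ IsRamsey (G i) k)).card ≤ r) :
    IsRamsey (iterNaorProd m (fun _ => Fin n) G) ((n + 1) ^ r * k ^ (m + 1 - r)) := by
  classical
  set q := min k (n + 1) with hq
  have hq1 : 1 ≤ q := le_min (by omega) (by omega)
  set c : Fin (m + 1) → ℕ := fun i => if IsRamsey (G i) k then q else n + 1 with hc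
  have hcard : ∀ (H : SimpleGraph (Fin n)), H.CliqueFree (n + 1) :=
    fun H => SimpleGraph.cliqueFree_of_card_lt (by simp)
  have hc1 : ∀ i, 1 ≤ c i := by
    intro i; simp only [hc]; split <;> omega
  have hGc : ∀ i, (G i).CliqueFree (c i) ∧ (G i)ᶜ.CliqueFree (c i) := by
    intro i
    simp only [hc]
    by_cases h : IsRamsey (G i) k
    · rw [if_pos h]
      rcases min_cases k (n + 1) with ⟨he, -⟩ | ⟨he, -⟩
      · rw [hq, he]; exact ⟨h.1, h.2⟩
      · rw [hq, he]; exact ⟨hcard _, hcard _⟩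
    · rw [if_neg h]; exact ⟨hcard _, hcard _⟩
  -- bound on the product
  have hprodeq : (∏ i, c i) =
      q ^ (Finset.univ.filter (fun i => IsRamsey (G i) k)).card *
      (n + 1) ^ (Finset.univ.filter (fun i => ¬ IsRamsey (G i) k)).card := by
    simp only [hc]
    rw [Finset.prod_ite, Finset.prod_const, Finset.prod_const]
  set b := (Finset.univ.filter (fun i => ¬ IsRamsey (G i) k)).card with hb
  have hbsum : (Finset.univ.filter (fun i => IsRamsey (G i) k)).card + b = m + 1 := by
    rw [hb, Finset.card_filter_add_card_filter_not]
    simp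
  have hble : b ≤ r := hG
  have hprodle : (∏ i, c i) ≤ (n + 1) ^ r * k ^ (m + 1 - r) := by
    rw [hprodeq]
    have h1 : (Finset.univ.filter (fun i => IsRamsey (G i) k)).card = m + 1 - b := by omega
    rw [h1]
    have h2 : m + 1 - b = (m + 1 - r) + (r - b) := by omega
    rw [h2, pow_add]
    calc q ^ (m + 1 - r) * q ^ (r - b) * (n + 1) ^ b
        ≤ k ^ (m + 1 - r) * (n + 1) ^ (r - b) * (n + 1) ^ b :=
          Nat.mul_le_mul (Nat.mul_le_mul (Nat.pow_le_pow_left (min_le_left _ _) _)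
            (Nat.pow_le_pow_left (min_le_right _ _) _)) le_rfl
      _ = (n + 1) ^ r * k ^ (m + 1 - r) := by
          rw [mul_assoc, ← pow_add]
          rw [show r - b + b = r by omega, Nat.mul_comm]
  constructor
  · exact (iterNaorProd_cliqueFree m _ G c hc1 (fun i => (hGc i).1)).mono hprodle
  · rw [iterNaorProd_compl]
    exact (iterNaorProd_cliqueFree m _ _ c hc1 (fun i => (hGc i).2)).mono hprodle
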